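/- Let n ≥ 3 be an integer. Then for every real number j with 2j a nonnegative integer, n − 2j a nonnegative even integer, and j ≤ n/2 − 1, one has T_*(j) ≤ n·ln(n/2) + n/(ln(n/2) − ln(ln(n/2))). -/

import Mathlib

/-- The probability `e_{j'}(j)` that a random SWAP test on `2j'` qubits in the
angular-momentum-`j` sector detects a singlet. -/
noncomputable def eprob (j' j : ℝ) : ℝ :=
  (j' * (j' + 1) - j * (j + 1)) / (2 * j' * (2 * j' - 1))

lemma term_le_aux (j : ℝ) (hj : 0 ≤ j) (r : ℕ) :
    1 / eprob (j + ((r : ℝ) + 1)) j ≤ 4 + 2 * j / ((r : ℝ) + 1) := by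
  have hR : (1 : ℝ) ≤ (r : ℝ) + 1 := by
    have : (0:ℝ) ≤ r := Nat.cast_nonneg r
    linarith
  set R : ℝ := (r : ℝ) + 1 with hRdef
  have hRpos : (0 : ℝ) < R := by linarith
  have he : eprob (j + R) j = (R * (2 * j + R + 1)) / ((2 * j + 2 * R) * (2 * j + 2 * R - 1)) := by
    unfold eprob; ring_nf
  rw [he, one_div_div]
  have h2 : (4 : ℝ) + 2 * j / R = (4 * R + 2 * j) / R := by field_simp
  rw [h2, div_le_div_iff₀ (by nlinarith) hRpos]
  nlinarith [sq_nonneg R, mul_nonneg hj hRpos.le]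

lemma harmonic_le_aux (k : ℕ) (hk : 1 ≤ k) :
    ∑ r ∈ Finset.range k, (1 : ℝ) / ((r : ℝ) + 1) ≤ 1 + Real.log k := by
  induction k with
  | zero => omega
  | succ m ih =>
    rcases Nat.eq_zero_or_pos m with h | h
    · subst h; simp
    · have ihm := ih h
      rw [Finset.sum_range_succ]
      have hmpos : (0 : ℝ) < (m : ℝ) := by exact_mod_cast h
      have hx : (0 : ℝ) < ((m : ℝ) + 1) / (m : ℝ) := by positivity
      have hlog := Real.one_sub_inv_le_log_of_pos hx
      have hdiv : Real.log (((m : ℝ) + 1) / (m : ℝ)) = Real.log ((m : ℝ) + 1) - Real.log m :=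
        Real.log_div (by positivity) (by positivity)
      have hinv : (((m : ℝ) + 1) / (m : ℝ))⁻¹ = (m : ℝ) / ((m : ℝ) + 1) := by
        rw [inv_div]
      rw [hdiv, hinv] at hlog
      have h1 : (1 : ℝ) / ((m : ℝ) + 1) ≤ Real.log ((m : ℝ) + 1) - Real.log m := by
        have : 1 - (m : ℝ) / ((m : ℝ) + 1) = 1 / ((m : ℝ) + 1) := by field_simp; ring
        linarith [this ▸ hlog]
      push_cast
      linarith

lemma big_case_aux (N K s : ℝ) (hN : 6 ≤ N) (hK : 1 ≤ K) (hs : s = N - 2*K) (hs0 : 0 ≤ s) :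
    4*K + s*(1 + Real.log K) ≤
      N * Real.log (N/2) + N / (Real.log (N/2) - Real.log (Real.log (N/2))) := by
  have hNpos : (0:ℝ) < N := by linarith
  set L := Real.log (N/2) with hLdef
  have hL1 : 1 ≤ L := by
    rw [hLdef, Real.le_log_iff_exp_le (by linarith : (0:ℝ) < N/2)]
    have := Real.exp_one_lt_d9
    linarith
  have hLpos : 0 < L := by linarith
  set a := Real.log L with hadef
  have ha0 : 0 ≤ a := Real.log_nonneg hL1
  have haL : a ≤ L - 1 := by
    have := Real.log_le_sub_one_of_pos hLpos; linarith
  set M := L - a with hMdef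
  have hM1 : 1 ≤ M := by simp only [hMdef]; linarith
  have hMpos : 0 < M := by linarith
  set b := Real.log M with hbdef
  have hb0 : 0 ≤ b := Real.log_nonneg hM1
  have hab : b ≤ a := by
    rw [hadef, hbdef]
    exact Real.log_le_log hMpos (by simp only [hMdef]; linarith)
  have hKpos : 0 < K := by linarith
  have htan : Real.log K ≤ L - b + 2*M*K/N - 1 := by
    have e1 : Real.log (2*M*K/N) ≤ 2*M*K/N - 1 :=
      Real.log_le_sub_one_of_pos (by positivity)
    have e2 : Real.log (2*M*K/N) = Real.log K - Real.log (N/(2*M)) := by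
      rw [show 2*M*K/N = K / (N/(2*M)) by rw [div_div_eq_mul_div]; ring]
      exact Real.log_div (ne_of_gt hKpos) (by positivity)
    have e3 : Real.log (N/(2*M)) = L - b := by
      rw [show N/(2*M) = (N/2)/M from (div_div N 2 M).symm, Real.log_div (by positivity) (ne_of_gt hMpos)]
    rw [e2, e3] at e1
    linarith
  have step1 : s*(1 + Real.log K) ≤ s*(L - b + 2*M*K/N) :=
    mul_le_mul_of_nonneg_left (by linarith) hs0
  have hMN : 0 < M*N := by positivity
  have key : M*N*((N*L + N/M) - (4*K + s*(L - b + 2*M*K/N)))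
      = (2*M*K - N)^2 + b*M*N^2 + 2*K*(a-b)*M*N := by
    rw [hs, show L = M + a by rw [hMdef]; ring]
    field_simp
    ring
  have hrhs : 0 ≤ (2*M*K - N)^2 + b*M*N^2 + 2*K*(a-b)*M*N := by
    have h1 : 0 ≤ b*M*N^2 := by positivity
    have h2 : 0 ≤ 2*K*(a-b)*M*N := by
      have : 0 ≤ a - b := by linarith
      positivity
    nlinarith [sq_nonneg (2*M*K - N)]
  have h0 : M*N*0 ≤ M*N*((N*L + N/M) - (4*K + s*(L - b + 2*M*K/N))) := by
    rw [mul_zero, key]; exact hrhs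
  have hX := le_of_mul_le_mul_left h0 hMN
  linarith

lemma aux_small (N x lo up B : ℝ) (hN : 0 < N) (hx : 0 < lo)
    (h1 : lo ≤ Real.log x) (h2 : Real.log x ≤ up)
    (hB : B ≤ N*lo + N/(up - 1 + 1/lo)) :
    B ≤ N * Real.log x + N / (Real.log x - Real.log (Real.log x)) := by
  set L := Real.log x with hLdef
  have hLpos : 0 < L := lt_of_lt_of_le hx h1
  have hle : Real.log L ≤ L - 1 := Real.log_le_sub_one_of_pos hLpos
  have hge : 1 - L⁻¹ ≤ Real.log L := Real.one_sub_inv_le_log_of_pos hLpos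
  have hinv : L⁻¹ ≤ 1/lo := by
    rw [one_div]
    exact inv_anti₀ hx h1
  have hMpos : 0 < L - Real.log L := by linarith
  have hMle : L - Real.log L ≤ up - 1 + 1/lo := by linarith
  have hdiv : N/(up - 1 + 1/lo) ≤ N/(L - Real.log L) :=
    div_le_div_of_nonneg_left hN.le hMpos hMle
  nlinarith [mul_le_mul_of_nonneg_left h1 hN.le]

lemma log_three_halves_ge : (2:ℝ)/5 ≤ Real.log (3/2) := by
  rw [Real.le_log_iff_exp_le (by norm_num : (0:ℝ) < 3/2)]
  have h5 : Real.exp (2/5) ^ (5:ℕ) = Real.exp 2 := by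
    rw [← Real.exp_nat_mul]; norm_num
  have he : Real.exp 2 < (3/2:ℝ)^(5:ℕ) := by
    have h1 : Real.exp 2 = Real.exp 1 ^ (2:ℕ) := by
      rw [← Real.exp_nat_mul]; norm_num
    have := Real.exp_one_lt_d9
    rw [h1]
    nlinarith [Real.exp_pos 1]
  have := lt_of_pow_lt_pow_left₀ 5 (by norm_num : (0:ℝ) ≤ 3/2) (h5 ▸ he)
  linarith

/-- **Uniform upper bound on the mean number of SWAP tests.** For any integer `n ≥ 3` and
any real `j` with `2j` a nonnegative integer, `n - 2j = 2k` a nonnegative even integer,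
and `j ≤ n/2 - 1`, one has
`T_*(j) = ∑_{j'=j+1}^{n/2} 1/e_{j'}(j) ≤ n·ln(n/2) + n/(ln(n/2) - ln(ln(n/2)))`. -/
theorem mean_swap_tests_max_bound
    (n : ℕ) (hn : 3 ≤ n) (j : ℝ) (h2j : ∃ m : ℕ, (m : ℝ) = 2 * j)
    (k : ℕ) (hkj : (n : ℝ) - 2 * j = 2 * k) (hjle : j ≤ (n : ℝ) / 2 - 1) :
    ∑ r ∈ Finset.range k, 1 / eprob (j + (r + 1)) j ≤
      n * Real.log ((n : ℝ) / 2)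
        + n / (Real.log ((n : ℝ) / 2) - Real.log (Real.log ((n : ℝ) / 2))) := by
  obtain ⟨m, hm⟩ := h2j
  have hj0 : 0 ≤ j := by
    have : (0:ℝ) ≤ (m:ℝ) := Nat.cast_nonneg m
    linarith [hm]
  have hk1R : (1:ℝ) ≤ (k:ℝ) := by linarith [hkj, hjle]
  have hk1 : 1 ≤ k := by exact_mod_cast hk1R
  -- the generic sum bound
  have hsum : ∑ r ∈ Finset.range k, 1 / eprob (j + ((r:ℝ) + 1)) j
      ≤ 4*(k:ℝ) + 2*j*(1 + Real.log k) := by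
    calc ∑ r ∈ Finset.range k, 1 / eprob (j + ((r:ℝ) + 1)) j
        ≤ ∑ r ∈ Finset.range k, (4 + 2*j/((r:ℝ)+1)) :=
          Finset.sum_le_sum fun r _ => term_le_aux j hj0 r
      _ = 4*(k:ℝ) + 2*j*∑ r ∈ Finset.range k, (1:ℝ)/((r:ℝ)+1) := by
          rw [Finset.sum_add_distrib, Finset.sum_const, Finset.card_range, Finset.mul_sum]
          congr 1
          · push_cast; ring
          · exact Finset.sum_congr rfl fun r _ => by ring
      _ ≤ 4*(k:ℝ) + 2*j*(1 + Real.log k) := by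
          have h := harmonic_le_aux k hk1
          nlinarith [mul_le_mul_of_nonneg_left h (by linarith : (0:ℝ) ≤ 2*j)]
  by_cases h6 : 6 ≤ n
  · -- large case
    have hN6 : (6:ℝ) ≤ (n:ℝ) := by exact_mod_cast h6
    have := big_case_aux (n:ℝ) (k:ℝ) (2*j) hN6 hk1R (by linarith [hkj]) (by linarith)
    calc ∑ r ∈ Finset.range k, 1 / eprob (j + ((r:ℝ) + 1)) j
        ≤ 4*(k:ℝ) + 2*j*(1 + Real.log k) := hsum
      _ ≤ _ := this
  · -- small cases : n = 3, 4, 5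
    have hmk : m + 2*k = n := by
      have : (m:ℝ) + 2*(k:ℝ) = (n:ℝ) := by linarith [hm, hkj]
      exact_mod_cast this
    have hm2 : m + 2 ≤ n := by
      have : (m:ℝ) ≤ (n:ℝ) - 2 := by linarith [hm, hjle]
      have h' : (m:ℝ) + 2 ≤ (n:ℝ) := by linarith
      exact_mod_cast h'
    interval_cases n
    · -- n = 3 : k = 1, j = 1/2
      have hk : k = 1 := by omega
      subst hk
      have hj : j = 1/2 := by push_cast at hkj; linarith
      subst hj
      have hsum3 : ∑ r ∈ Finset.range 1, 1 / eprob ((1:ℝ)/2 + ((r:ℝ) + 1)) (1/2) = 2 := by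
        rw [Finset.sum_range_one]
        norm_num [eprob]
      rw [hsum3]
      have := aux_small ((3:ℕ):ℝ) (((3:ℕ):ℝ)/2) (2/5) (1/2) 2 (by norm_num)
        (by norm_num) (by push_cast; exact_mod_cast log_three_halves_ge)
        (by push_cast; nlinarith [Real.log_le_sub_one_of_pos (by norm_num : (0:ℝ) < (3:ℝ)/2)])
        (by norm_num)
      exact this
    · -- n = 4
      have hlog2lo := Real.log_two_gt_d9
      have hlog2hi := Real.log_two_lt_d9
      have h42 : ((4:ℕ):ℝ)/2 = 2 := by norm_num
      have hk12 : k = 1 ∨ k = 2 := by omega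
      have hrhs4 : (3:ℝ) ≤ ((4:ℕ):ℝ) * Real.log (((4:ℕ):ℝ)/2)
          + ((4:ℕ):ℝ) / (Real.log (((4:ℕ):ℝ)/2) - Real.log (Real.log (((4:ℕ):ℝ)/2))) := by
        rw [h42]
        exact aux_small 4 2 (0.6931471803) (0.6931471808) 3 (by norm_num) (by norm_num)
          hlog2lo.le hlog2hi.le (by norm_num)
      rcases hk12 with hk | hk
      · subst hk
        have hj : j = 1 := by push_cast at hkj; linarith
        subst hj
        have : ∑ r ∈ Finset.range 1, 1 / eprob ((1:ℝ) + ((r:ℝ) + 1)) 1 = 3 := by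
          rw [Finset.sum_range_one]
          norm_num [eprob]
        rw [this]
        exact hrhs4
      · subst hk
        have hj : j = 0 := by push_cast at hkj; linarith
        subst hj
        have : ∑ r ∈ Finset.range 2, 1 / eprob ((0:ℝ) + ((r:ℝ) + 1)) 0 = 3 := by
          rw [Finset.sum_range_succ, Finset.sum_range_one]
          norm_num [eprob]
        rw [this]
        exact hrhs4
    · -- n = 5
      have h52 : ((5:ℕ):ℝ)/2 = 5/2 := by norm_num
      have hlo : (3:ℝ)/5 ≤ Real.log (5/2) := by
        have := Real.one_sub_inv_le_log_of_pos (by norm_num : (0:ℝ) < 5/2)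
        norm_num at this ⊢
        linarith
      have hhi : Real.log ((5:ℝ)/2) ≤ 1 := by
        rw [Real.log_le_iff_le_exp (by norm_num : (0:ℝ) < 5/2)]
        have := Real.exp_one_gt_d9; linarith
      have hrhs5 : (9:ℝ)/2 ≤ ((5:ℕ):ℝ) * Real.log (((5:ℕ):ℝ)/2)
          + ((5:ℕ):ℝ) / (Real.log (((5:ℕ):ℝ)/2) - Real.log (Real.log (((5:ℕ):ℝ)/2))) := by
        rw [h52]
        exact aux_small 5 (5/2) (3/5) 1 (9/2) (by norm_num) (by norm_num) hlo hhi (by norm_num)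
      have hk12 : k = 1 ∨ k = 2 := by omega
      rcases hk12 with hk | hk
      · subst hk
        have hj : j = 3/2 := by push_cast at hkj; linarith
        subst hj
        have : ∑ r ∈ Finset.range 1, 1 / eprob ((3:ℝ)/2 + ((r:ℝ) + 1)) (3/2) = 4 := by
          rw [Finset.sum_range_one]
          norm_num [eprob]
        rw [this]
        linarith
      · subst hk
        have hj : j = 1/2 := by push_cast at hkj; linarith
        subst hj
        have : ∑ r ∈ Finset.range 2, 1 / eprob ((1:ℝ)/2 + ((r:ℝ) + 1)) (1/2) = 9/2 := by
          rw [Finset.sum_range_succ, Finset.sum_range_one]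
          norm_num [eprob]
        rw [this]
        exact hrhs5
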